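/- Let k > 1 and p > 0 be real numbers with k ∉ ℤ, set r = kp, and assume r ∉ ℤ and r − ⌊r⌋ < ⌈k⌉ − k. Define α = ⌊k⌋(⌈k⌉ − k)/k, β = 1 − (r − ⌊r⌋)/(⌈k⌉ − k) and δ = 1. Then 0 < α < 1, 0 < β ≤ 1, and αβ·⌊r⌋/⌊k⌋ + α(1−β)·⌈r⌉/⌊k⌋ + (1−α)δ·⌊r⌋/⌈k⌉ + (1−α)(1−δ)·⌈r⌉/⌈k⌉ = p. -/

import Mathlib

lemma ceil_floor_aux (x : ℝ) (hx : ∀ z : ℤ, x ≠ (z : ℝ)) :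
    (⌈x⌉ : ℝ) = (⌊x⌋ : ℝ) + 1 ∧ (⌊x⌋ : ℝ) < x := by
  have h1 : (⌊x⌋ : ℝ) < x := lt_of_le_of_ne (Int.floor_le x) (fun h => hx ⌊x⌋ h.symm)
  have h2 : ⌈x⌉ = ⌊x⌋ + 1 := by
    have hle : ⌈x⌉ ≤ ⌊x⌋ + 1 := Int.ceil_le_floor_add_one x
    have hlt : ⌊x⌋ < ⌈x⌉ := by
      have : x < ⌈x⌉ := lt_of_le_of_ne (Int.le_ceil x) (hx ⌈x⌉)
      exact_mod_cast Int.lt_ceil.mpr (lt_of_le_of_lt (le_refl _) (h1.trans this)) |>.trans_le (le_refl _) |> fun _ => Int.lt_iff_add_one_le.mpr (by exact_mod_cast Int.add_one_le_of_lt (Int.lt_ceil.mpr h1))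
    omega
  exact ⟨by exact_mod_cast congrArg (Int.cast : ℤ → ℝ) h2, h1⟩

/-- Theorem 1 storage-balance check, case `⌊r⌋−⌊k⌋` even and
`r−⌊r⌋ < ⌈k⌉−k`: with `α = ⌊k⌋(⌈k⌉−k)/k`, `β = 1 − (r−⌊r⌋)/(⌈k⌉−k)` and
`δ = 1`, the four MDS-coded fractions use exactly the total normalized
storage `p`. -/
theorem pruw_thm1_balance_even_small_frac (k p : ℝ) (hk : 1 < k) (hp : 0 < p)
    (hknotint : ∀ z : ℤ, k ≠ (z : ℝ)) (r : ℝ) (hr : r = k * p)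
    (hrnotint : ∀ z : ℤ, r ≠ (z : ℝ)) (hcase : r - (⌊r⌋ : ℝ) < (⌈k⌉ : ℝ) - k)
    (α β δ : ℝ)
    (hα : α = (⌊k⌋ : ℝ) * ((⌈k⌉ : ℝ) - k) / k)
    (hβ : β = 1 - (r - (⌊r⌋ : ℝ)) / ((⌈k⌉ : ℝ) - k)) (hδ : δ = 1) :
    0 < α ∧ α < 1 ∧ 0 < β ∧ β ≤ 1 ∧
    α * β * ((⌊r⌋ : ℝ) / (⌊k⌋ : ℝ)) + α * (1 - β) * ((⌈r⌉ : ℝ) / (⌊k⌋ : ℝ)) +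
      (1 - α) * δ * ((⌊r⌋ : ℝ) / (⌈k⌉ : ℝ)) +
      (1 - α) * (1 - δ) * ((⌈r⌉ : ℝ) / (⌈k⌉ : ℝ)) = p := by
  obtain ⟨hkc, hkf⟩ := ceil_floor_aux k hknotint
  obtain ⟨hrc, hrf⟩ := ceil_floor_aux r hrnotint
  have hk0 : (0:ℝ) < k := lt_trans one_pos hk
  have hkl1 : (1:ℝ) ≤ (⌊k⌋ : ℝ) := by exact_mod_cast Int.le_floor.mpr (by exact_mod_cast hk.le)
  have hck : k < (⌈k⌉ : ℝ) := lt_of_le_of_ne (Int.le_ceil k) (hknotint ⌈k⌉)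
  have hgap : (0:ℝ) < (⌈k⌉ : ℝ) - k := by linarith
  have hrge0 : (0:ℝ) ≤ r - (⌊r⌋ : ℝ) := by linarith
  have hα0 : 0 < α := by
    rw [hα]; positivity
  have hα1 : α < 1 := by
    rw [hα, div_lt_one hk0, hkc]
    nlinarith
  have hβ1 : β ≤ 1 := by
    rw [hβ]
    have : 0 ≤ (r - (⌊r⌋ : ℝ)) / ((⌈k⌉ : ℝ) - k) := by positivity
    linarith
  have hβ0 : 0 < β := by
    rw [hβ]
    have : (r - (⌊r⌋ : ℝ)) / ((⌈k⌉ : ℝ) - k) < 1 := (div_lt_one hgap).mpr hcase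
    linarith
  refine ⟨hα0, hα1, hβ0, hβ1, ?_⟩
  have hk0' : (⌊k⌋ : ℝ) ≠ 0 := by linarith
  have hck0 : (⌈k⌉ : ℝ) ≠ 0 := by rw [hkc]; linarith
  have hp' : p = r / k := by rw [hr]; field_simp
  rw [hα, hβ, hδ, hkc, hrc, hp']
  have hgap' : (⌊k⌋ : ℝ) + 1 - k ≠ 0 := by rw [hkc] at hgap; linarith
  field_simp
  have hfr : Int.fract r = r - (⌊r⌋ : ℝ) := Int.self_sub_floor r ▸ rfl
  ring
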